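/- Fix a real number z > 1 and define f(a) = log(1 − 1/a) / log(1 − z/a) for a < 0. Then f is monotone non-decreasing on (−∞, 0): for all real numbers a, a' with a ≤ a' < 0 one has f(a) ≤ f(a'). (The explicit computation concluding the Appendix; note that for a < 0 both 1 − 1/a > 1 and 1 − z/a > 1, so both logarithms are positive.) -/

import Mathlib

open Real Set

private lemma psi_deriv (z : ℝ) (hz : 1 < z) {x : ℝ} (hx : 0 ≤ x) :
    HasDerivAt (fun u => Real.log (1 + z * (Real.exp u - 1)))
      (z * Real.exp x / (1 + z * (Real.exp x - 1))) x := by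
  have hpos : 0 < 1 + z * (Real.exp x - 1) := by
    have h1 : 1 ≤ Real.exp x := Real.one_le_exp hx
    nlinarith
  have h1 : HasDerivAt (fun u => 1 + z * (Real.exp u - 1)) (z * Real.exp x) x := by
    have h2 : HasDerivAt (fun u => 1 + (z * Real.exp u - z)) (z * Real.exp x) x := by
      simpa using (((Real.hasDerivAt_exp x).const_mul z).sub_const z).const_add 1
    have : (fun u => 1 + (z * Real.exp u - z)) = (fun u => 1 + z * (Real.exp u - 1)) := by
      funext u; ring
    rwa [this] at h2
  exact h1.log (ne_of_gt hpos)

private lemma psi_concave (z : ℝ) (hz : 1 < z) :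
    ConcaveOn ℝ (Set.Ici (0:ℝ)) (fun u => Real.log (1 + z * (Real.exp u - 1))) := by
  have hint : interior (Set.Ici (0:ℝ)) = Set.Ioi 0 := interior_Ici
  refine AntitoneOn.concaveOn_of_deriv (convex_Ici 0) ?_ ?_ ?_
  · intro x hx
    exact ((psi_deriv z hz hx).continuousAt).continuousWithinAt
  · rw [hint]
    intro x hx
    exact ((psi_deriv z hz (le_of_lt hx)).differentiableAt).differentiableWithinAt
  · rw [hint]
    intro x hx y hy hxy
    rw [(psi_deriv z hz (le_of_lt hx)).deriv, (psi_deriv z hz (le_of_lt hy)).deriv]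
    have hex : (1:ℝ) < Real.exp x := Real.one_lt_exp_iff.mpr hx
    have hey : (1:ℝ) < Real.exp y := Real.one_lt_exp_iff.mpr hy
    have hexy : Real.exp x ≤ Real.exp y := Real.exp_le_exp.mpr hxy
    have hdx : 0 < 1 + z * (Real.exp x - 1) := by nlinarith
    have hdy : 0 < 1 + z * (Real.exp y - 1) := by nlinarith
    rw [div_le_div_iff₀ hdy hdx]
    have hh : 0 ≤ z * (z - 1) * (Real.exp y - Real.exp x) := by
      apply mul_nonneg (mul_nonneg (by linarith) (by linarith)) (by linarith)
    nlinarith [hh]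

private lemma key_ineq (z : ℝ) (hz : 1 < z) {t t' : ℝ} (ht : 0 < t) (htt' : t ≤ t') :
    Real.log (1 + t) * Real.log (1 + z * t') ≤ Real.log (1 + t') * Real.log (1 + z * t) := by
  have ht' : 0 < t' := lt_of_lt_of_le ht htt'
  set u := Real.log (1 + t) with hu
  set u' := Real.log (1 + t') with hu'
  have hu0 : 0 < u := Real.log_pos (by linarith)
  have hu'0 : 0 < u' := Real.log_pos (by linarith)
  have huu' : u ≤ u' := Real.log_le_log (by linarith) (by linarith)
  set ψ : ℝ → ℝ := fun v => Real.log (1 + z * (Real.exp v - 1)) with hψ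
  have hψu : ψ u = Real.log (1 + z * t) := by
    simp only [hψ, hu, Real.exp_log (by linarith : (0:ℝ) < 1 + t)]
    ring_nf
  have hψu' : ψ u' = Real.log (1 + z * t') := by
    simp only [hψ, hu', Real.exp_log (by linarith : (0:ℝ) < 1 + t')]
    ring_nf
  have hψ0 : ψ 0 = 0 := by simp [hψ]
  have hA : (0:ℝ) ≤ 1 - u / u' := by
    rw [sub_nonneg]; exact div_le_one_of_le₀ huu' hu'0.le
  have hB : (0:ℝ) ≤ u / u' := by positivity
  have hAB : (1 - u / u') + u / u' = 1 := by ring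
  have hC := (psi_concave z hz).2 (Set.self_mem_Ici) (Set.mem_Ici.mpr hu'0.le) hA hB hAB
  have hc : (1 - u / u') • (0:ℝ) + (u / u') • u' = u := by
    rw [smul_zero, zero_add, smul_eq_mul]
    field_simp
  rw [← hψ, hc, hψ0, smul_zero, zero_add, smul_eq_mul] at hC
  have hC' : (u / u') * ψ u' ≤ ψ u := hC
  rw [hψu, hψu'] at hC'
  have hC'' := mul_le_mul_of_nonneg_left hC' hu'0.le
  have heq : u' * ((u / u') * Real.log (1 + z * t')) = u * Real.log (1 + z * t') := by
    field_simp
  rw [heq] at hC''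
  exact hC''

/-- The explicit computation concluding the Appendix: for `z > 1`, the function
`a ↦ log(1 − 1/a) / log(1 − z/a)` is monotone non-decreasing on `(−∞, 0)`. -/
theorem appendix_monotone (z : ℝ) (hz : 1 < z) (a a' : ℝ) (h : a ≤ a') (h' : a' < 0) :
    Real.log (1 - 1 / a) / Real.log (1 - z / a) ≤
      Real.log (1 - 1 / a') / Real.log (1 - z / a') := by
  have ha : a < 0 := lt_of_le_of_lt h h'
  set t := -(1 / a) with htdef
  set t' := -(1 / a') with ht'def
  have ht : 0 < t := by rw [htdef]; exact neg_pos.mpr (one_div_neg.mpr ha)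
  have ht' : 0 < t' := by rw [ht'def]; exact neg_pos.mpr (one_div_neg.mpr h')
  have htt' : t ≤ t' := by
    have : -a' ≤ -a := by linarith
    have h2 : 1 / (-a) ≤ 1 / (-a') := one_div_le_one_div_of_le (by linarith) this
    simpa [htdef, ht'def, one_div] using h2
  have e1 : 1 - 1 / a = 1 + t := by rw [htdef]; ring
  have e2 : 1 - z / a = 1 + z * t := by rw [htdef]; ring
  have e3 : 1 - 1 / a' = 1 + t' := by rw [ht'def]; ring
  have e4 : 1 - z / a' = 1 + z * t' := by rw [ht'def]; ring
  rw [e1, e2, e3, e4]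
  have hzt : 0 < Real.log (1 + z * t) := Real.log_pos (by nlinarith)
  have hzt' : 0 < Real.log (1 + z * t') := Real.log_pos (by nlinarith)
  rw [div_le_div_iff₀ hzt hzt']
  exact key_ineq z hz ht htt'
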